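/- Let G(U, V; E) be a bipartite graph with parts of size n containing a perfect matching M, with pairwise distinct prices p_1, …, p_n ∈ [1/e, 1] on V. Fix i, let M(v_i) ∈ U be the vertex matched to v_i under M, and let p be the price of the item matched to M(v_i) in the greedy-by-price process run on G with v_i deleted (with p = 1 if M(v_i) is unmatched in that run). If p_i < p, then v_i is matched in the greedy-by-price process on G. -/

import Mathlib

open scoped Classical

noncomputable section

/-- The element of `c` minimizing `key`, if `c` is nonempty. -/
def pickMin {n : ℕ} {α : Type*} [LinearOrder α] (key : Fin n → α)
    (c : Finset (Fin n)) : Option (Fin n) :=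
  if h : c.Nonempty then some (Classical.choose (Finset.exists_min_image c key h)) else none

/-- The set of matched `V`-vertices after the first `j` arrivals of the online greedy
process on the bipartite graph with `U`-side arrival order `u_0, u_1, …` and adjacency
`adj`, in which each arriving `u_j` is matched to its currently unmatched neighbor
minimizing `key` (if any). -/
def greedyRun {n : ℕ} {α : Type*} [LinearOrder α] (adj : ℕ → Fin n → Prop)
    (key : Fin n → α) : ℕ → Finset (Fin n)
  | 0 => ∅
  | j + 1 =>
    match pickMin key ((Finset.univ.filter fun i => adj j i) \ greedyRun adj key j) with
    | some v => insert v (greedyRun adj key j)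
    | none => greedyRun adj key j

/-- The `V`-vertex that the arriving vertex `u_j` (0-indexed) gets matched to, if any. -/
def greedyMatchU {n : ℕ} {α : Type*} [LinearOrder α] (adj : ℕ → Fin n → Prop)
    (key : Fin n → α) (j : ℕ) : Option (Fin n) :=
  pickMin key ((Finset.univ.filter fun i => adj j i) \ greedyRun adj key j)

/-- Adjacency of the monotone graph `MonotoneG` (0-indexed):
`u_j` is adjacent to `v_i` iff `j ≤ i`. -/
def monoAdj (n : ℕ) : ℕ → Fin n → Prop := fun j i => j ≤ (i : ℕ)

/-- The set of matched `V`-vertices produced by the Ranking greedy process on `MonotoneG`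
with permutation `π` (where `π i` is the rank of `v_i`, 0-indexed). -/
def rankMatched (n : ℕ) (π : Equiv.Perm (Fin n)) : Finset (Fin n) :=
  greedyRun (monoAdj n) (fun i => π i) n

/-- `x(π)`: the number of edges of the matching produced by Ranking on `MonotoneG`. -/
def xSize (n : ℕ) (π : Equiv.Perm (Fin n)) : ℕ := (rankMatched n π).card

/-- `a(n) = Σ_π x(π)`, over all `n!` permutations. -/
def aVal (n : ℕ) : ℕ := ∑ π : Equiv.Perm (Fin n), xSize n π

/-- `a(n,i)` (with `i` 1-indexed): the number of permutations `π` of `{1,…,n}` for which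
the vertex of rank `i` under `π` is matched by the Ranking greedy process on `MonotoneG`. -/
def aIdx (n i : ℕ) : ℕ :=
  (Finset.univ.filter fun π : Equiv.Perm (Fin n) =>
    ∃ v : Fin n, (π v : ℕ) = i - 1 ∧ v ∈ rankMatched n π).card

/-- `d(m,i)` (with `i` 1-indexed): the number of permutations of `{1,…,m}` all of whose
fixed points (if any) lie among the first `i` items. -/
def dIdx (m i : ℕ) : ℕ :=
  (Finset.univ.filter fun σ : Equiv.Perm (Fin m) => ∀ x, σ x = x → (x : ℕ) < i).card

/-- `d(m)`: the number of derangements of `{1,…,m}`. -/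
def numDer (m : ℕ) : ℕ :=
  (Finset.univ.filter fun σ : Equiv.Perm (Fin m) => ∀ x, σ x ≠ x).card

/-- The key for the greedy-by-price process: buy the cheapest available item,
breaking ties in favor of the smaller index. -/
def priceKey {n : ℕ} (p : Fin n → ℝ) : Fin n → Lex (ℝ × ℕ) := fun i => toLex (p i, (i : ℕ))

/-- The utility `y(u_j)` of buyer `u_j` (0-indexed) in the greedy-by-price process:
`1 - p v` if `u_j` buys item `v`, and `0` if `u_j` remains unmatched. -/
def utility (n : ℕ) (adj : ℕ → Fin n → Prop) (p : Fin n → ℝ) (j : ℕ) : ℝ :=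
  (greedyMatchU adj (priceKey p) j).elim 0 (fun v => 1 - p v)

/-- The revenue `r(v)` from item `v` in the greedy-by-price process:
`p v` if `v` is sold, and `0` otherwise. -/
def revenue (n : ℕ) (adj : ℕ → Fin n → Prop) (p : Fin n → ℝ) (v : Fin n) : ℝ :=
  if v ∈ greedyRun adj (priceKey p) n then p v else 0

/-- The `m`-th harmonic number `H_m = Σ_{i=1}^m 1/i` (with `H_0 = 0`). -/
def harm (m : ℕ) : ℝ := ∑ i ∈ Finset.range m, (1 : ℝ) / (i + 1)

lemma pickMin_some_spec {n : ℕ} {α : Type*} [LinearOrder α] {key : Fin n → α}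
    {c : Finset (Fin n)} {v : Fin n} (h : pickMin key c = some v) :
    v ∈ c ∧ ∀ w ∈ c, key v ≤ key w := by
  unfold pickMin at h
  split at h
  · obtain ⟨h1, h2⟩ := Classical.choose_spec (Finset.exists_min_image c key ‹_›)
    cases h
    exact ⟨h1, h2⟩
  · simp at h

lemma pickMin_none_of {n : ℕ} {α : Type*} [LinearOrder α] {key : Fin n → α}
    {c : Finset (Fin n)} (h : ¬ c.Nonempty) : pickMin key c = none := by
  unfold pickMin; simp [h]

lemma pickMin_eq_some {n : ℕ} {α : Type*} [LinearOrder α] {key : Fin n → α}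
    (hinj : Function.Injective key) {c : Finset (Fin n)} {v : Fin n}
    (hv : v ∈ c) (hmin : ∀ w ∈ c, key v ≤ key w) : pickMin key c = some v := by
  unfold pickMin
  have hne : c.Nonempty := ⟨v, hv⟩
  rw [dif_pos hne]
  obtain ⟨h1, h2⟩ := Classical.choose_spec (Finset.exists_min_image c key hne)
  exact congrArg some (hinj (le_antisymm (h2 v hv) (hmin _ h1)))

lemma greedyRun_subset_succ {n : ℕ} {α : Type*} [LinearOrder α] (adj : ℕ → Fin n → Prop)
    (key : Fin n → α) (j : ℕ) : greedyRun adj key j ⊆ greedyRun adj key (j + 1) := by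
  rw [greedyRun]
  cases h : pickMin key ((Finset.univ.filter fun i => adj j i) \ greedyRun adj key j) with
  | none => exact fun x hx => hx
  | some v => exact Finset.subset_insert _ _

lemma greedyRun_subset {n : ℕ} {α : Type*} [LinearOrder α] (adj : ℕ → Fin n → Prop)
    (key : Fin n → α) {j k : ℕ} (h : j ≤ k) : greedyRun adj key j ⊆ greedyRun adj key k := by
  induction k with
  | zero => rw [Nat.le_zero.mp h]
  | succ k ih =>
    rcases Nat.lt_or_ge j (k+1) with h' | h'
    · exact (ih (Nat.lt_succ_iff.mp h')).trans (greedyRun_subset_succ adj key k)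
    · rw [le_antisymm h h']

lemma priceKey_injective {n : ℕ} (p : Fin n → ℝ) : Function.Injective (priceKey p) := by
  intro a b h
  unfold priceKey at h
  have := congrArg (fun x => (ofLex x).2) h
  simpa [Fin.val_injective.eq_iff] using this

/-- Deleting an unmatched vertex `i` from the graph does not change the greedy run. -/
lemma runs_agree {n N : ℕ} {α : Type*} [LinearOrder α] (adj adj' : ℕ → Fin n → Prop)
    (key : Fin n → α) (hinj : Function.Injective key) (i : Fin n)
    (hiff : ∀ a b, adj' a b ↔ adj a b ∧ b ≠ i)
    (hni : i ∉ greedyRun adj key N) :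
    ∀ j ≤ N, greedyRun adj' key j = greedyRun adj key j := by
  have hnever : ∀ j ≤ N, i ∉ greedyRun adj key j := fun j hj hmem =>
    hni (greedyRun_subset adj key hj hmem)
  intro j hj
  induction j with
  | zero => rfl
  | succ j ih =>
    have hj' : j ≤ N := Nat.le_of_succ_le hj
    have ihj := ih hj'
    have hS' : (Finset.univ.filter fun v => adj' j v) \ greedyRun adj key j
        = ((Finset.univ.filter fun v => adj j v) \ greedyRun adj key j).erase i := by
      ext w
      simp only [Finset.mem_sdiff, Finset.mem_filter, Finset.mem_univ, true_and,
        Finset.mem_erase, hiff]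
      tauto
    rw [greedyRun, greedyRun, ihj, hS']
    rcases Option.eq_none_or_eq_some
        (pickMin key ((Finset.univ.filter fun v => adj j v) \ greedyRun adj key j)) with
      hpick | ⟨v, hpick⟩
    · have hne : ¬ ((Finset.univ.filter fun v => adj j v) \ greedyRun adj key j).Nonempty := by
        intro hne
        unfold pickMin at hpick
        rw [dif_pos hne] at hpick
        simp at hpick
      have : ¬ (((Finset.univ.filter fun v => adj j v) \ greedyRun adj key j).erase i).Nonempty :=
        fun ⟨w, hw⟩ => hne ⟨w, Finset.mem_of_mem_erase hw⟩
      rw [hpick, pickMin_none_of this]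
    · obtain ⟨hvS, hvmin⟩ := pickMin_some_spec hpick
      have hvne : v ≠ i := by
        intro he; subst he
        refine hnever (j+1) hj ?_
        rw [greedyRun, hpick]
        exact Finset.mem_insert_self _ _
      rw [hpick, pickMin_eq_some hinj (Finset.mem_erase.mpr ⟨hvne, hvS⟩)
        (fun w hw => hvmin w (Finset.mem_of_mem_erase hw))]

/-- Let `G(U,V;E)` be a bipartite graph with parts of size `n` (vertex `u_j` of `U` is
0-indexed by the arrival step `j < n`) containing a perfect matching `M` (where `M v` is
the `U`-vertex matched to `v`), with pairwise distinct prices `p i ∈ [1/e, 1]` on `V`.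
Fix `i`, and let `q` be the price of the item matched to `M(v_i)` in the greedy-by-price
process run on `G` with `v_i` deleted (with `q = 1` if `M(v_i)` is unmatched in that
run). If `p i < q`, then `v_i` is matched in the greedy-by-price process on `G`. -/
theorem stmt_17 (n : ℕ) (adj : ℕ → Fin n → Prop) (p : Fin n → ℝ)
    (hp1 : ∀ i, 1 / Real.exp 1 ≤ p i ∧ p i ≤ 1) (hp2 : Function.Injective p)
    (M : Equiv.Perm (Fin n)) (hM : ∀ v : Fin n, adj ((M v : Fin n) : ℕ) v)
    (i : Fin n) (q : ℝ)
    (hq : q = (greedyMatchU (fun a b => adj a b ∧ b ≠ i) (priceKey p)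
      ((M i : Fin n) : ℕ)).elim 1 (fun w => p w))
    (hlt : p i < q) :
    i ∈ greedyRun adj (priceKey p) n := by
  by_contra hni
  obtain ⟨adj', hadj'⟩ : ∃ adj' : ℕ → Fin n → Prop, adj' = fun a b => adj a b ∧ b ≠ i :=
    ⟨_, rfl⟩
  rw [← hadj'] at hq
  have hiff : ∀ a b, adj' a b ↔ adj a b ∧ b ≠ i := by rw [hadj']; intro a b; rfl
  set K := priceKey p with hK
  have hKinj : Function.Injective K := priceKey_injective p
  have hnever : ∀ j ≤ n, i ∉ greedyRun adj K j := fun j hj hmem =>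
    hni (greedyRun_subset adj K hj hmem)
  have hruns := runs_agree adj adj' K hKinj i hiff hni
  have hj0 : ((M i : Fin n) : ℕ) < n := (M i).isLt
  have hiS : i ∈ (Finset.univ.filter fun v => adj ((M i : Fin n) : ℕ) v)
      \ greedyRun adj K ((M i : Fin n) : ℕ) :=
    Finset.mem_sdiff.mpr ⟨Finset.mem_filter.mpr ⟨Finset.mem_univ _, hM i⟩,
      hnever _ (le_of_lt hj0)⟩
  have hSne : ((Finset.univ.filter fun v => adj ((M i : Fin n) : ℕ) v)
      \ greedyRun adj K ((M i : Fin n) : ℕ)).Nonempty := ⟨i, hiS⟩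
  obtain ⟨v, hv⟩ : ∃ v, pickMin K ((Finset.univ.filter fun v => adj ((M i : Fin n) : ℕ) v)
      \ greedyRun adj K ((M i : Fin n) : ℕ)) = some v := by
    unfold pickMin
    rw [dif_pos hSne]
    exact ⟨_, rfl⟩
  obtain ⟨hvS, hvmin⟩ := pickMin_some_spec hv
  have hvne : v ≠ i := by
    intro he
    refine hnever (((M i : Fin n) : ℕ)+1) hj0 ?_
    rw [greedyRun, hv]
    exact he ▸ Finset.mem_insert_self v _
  have hS' : (Finset.univ.filter fun w => adj' ((M i : Fin n) : ℕ) w)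
      \ greedyRun adj K ((M i : Fin n) : ℕ)
      = ((Finset.univ.filter fun w => adj ((M i : Fin n) : ℕ) w)
        \ greedyRun adj K ((M i : Fin n) : ℕ)).erase i := by
    ext w
    simp only [Finset.mem_sdiff, Finset.mem_filter, Finset.mem_univ, true_and,
      Finset.mem_erase, hiff]
    tauto
  have hpick' : greedyMatchU adj' K ((M i : Fin n) : ℕ) = some v := by
    unfold greedyMatchU
    rw [hruns _ (le_of_lt hj0), hS']
    exact pickMin_eq_some hKinj (Finset.mem_erase.mpr ⟨hvne, hvS⟩)
      (fun w hw => hvmin w (Finset.mem_of_mem_erase hw))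
  have hqv : q = p v := by
    rw [hq, hpick']
    rfl
  have hkle : K v ≤ K i := hvmin i hiS
  have hlt' : p v < p i := by
    rcases Prod.Lex.le_iff.mp hkle with h1 | ⟨h1, _⟩
    · exact h1
    · exact absurd (hp2 h1) hvne
  rw [hqv] at hlt
  exact absurd hlt (not_lt.mpr hlt'.le)
end
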